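/- Let p ≥ 2 and f the change-of-variables function. If (v_n) ⊂ Lᵖ(ℝᴺ) is a sequence of nonnegative functions with v_n → v a.e., ∫|f(v_n)|^p → ∫|f(v)|^p < ∞, and v ∈ Lᵖ(ℝᴺ), then ∫_{ℝᴺ} |f(v_n − v)|^p → 0. -/

import Mathlib

open MeasureTheory Filter

/-- Generalized dominated convergence: if `0 ≤ F n ≤ g n` pointwise, `F n → 0` a.e.,
`g n → G` a.e., all `g n` and `G` integrable with `∫ g n → ∫ G`, then `∫ F n → 0`. -/
lemma gen_dct {α : Type*} [MeasurableSpace α] {μ : Measure α}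
    {F g : ℕ → α → ℝ} {G : α → ℝ}
    (hFmeas : ∀ n, AEMeasurable (F n) μ)
    (hF0 : ∀ n x, 0 ≤ F n x)
    (hle : ∀ n x, F n x ≤ g n x)
    (hG0 : ∀ x, 0 ≤ G x)
    (hg_int : ∀ n, Integrable (g n) μ)
    (hG_int : Integrable G μ)
    (hFlim : ∀ᵐ x ∂μ, Tendsto (fun n => F n x) atTop (nhds 0))
    (hglim : ∀ᵐ x ∂μ, Tendsto (fun n => g n x) atTop (nhds (G x)))
    (hgtend : Tendsto (fun n => ∫ x, g n x ∂μ) atTop (nhds (∫ x, G x ∂μ))) :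
    Tendsto (fun n => ∫ x, F n x ∂μ) atTop (nhds 0) := by
  have hg0 : ∀ n x, 0 ≤ g n x := fun n x => (hF0 n x).trans (hle n x)
  set F' : ℕ → α → ENNReal := fun n x => ENNReal.ofReal (F n x) with hF'
  set g' : ℕ → α → ENNReal := fun n x => ENNReal.ofReal (g n x) with hg'
  set G' : α → ENNReal := fun x => ENNReal.ofReal (G x) with hG'
  have hF'meas : ∀ n, AEMeasurable (F' n) μ := fun n =>
    ENNReal.measurable_ofReal.comp_aemeasurable (hFmeas n)
  have hg'meas : ∀ n, AEMeasurable (g' n) μ := fun n =>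
    ENNReal.measurable_ofReal.comp_aemeasurable (hg_int n).aemeasurable
  set a : ℕ → ENNReal := fun n => ∫⁻ x, g' n x ∂μ with ha_def
  set b : ℕ → ENNReal := fun n => ∫⁻ x, F' n x ∂μ with hb_def
  set L : ENNReal := ∫⁻ x, G' x ∂μ with hL_def
  have hLeq : ENNReal.ofReal (∫ x, G x ∂μ) = L :=
    ofReal_integral_eq_lintegral_ofReal hG_int (Eventually.of_forall hG0)
  have haeq : ∀ n, ENNReal.ofReal (∫ x, g n x ∂μ) = a n := fun n =>
    ofReal_integral_eq_lintegral_ofReal (hg_int n) (Eventually.of_forall (hg0 n))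
  have hL : L ≠ ⊤ := by rw [← hLeq]; exact ENNReal.ofReal_ne_top
  have ha : Tendsto a atTop (nhds L) := by
    rw [← hLeq]
    have ht := (ENNReal.continuous_ofReal.tendsto _).comp hgtend
    have he : (ENNReal.ofReal ∘ fun n => ∫ x, g n x ∂μ) = fun n => a n := funext haeq
    rwa [he] at ht
  have hba : ∀ n, b n ≤ a n := fun n =>
    lintegral_mono fun x => ENNReal.ofReal_le_ofReal (hle n x)
  have han : ∀ n, a n ≠ ⊤ := fun n => by rw [← haeq n]; exact ENNReal.ofReal_ne_top
  -- Fatou applied to `g' n - F' n`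
  have hsub : ∀ n x, ENNReal.ofReal (g n x - F n x) = g' n x - F' n x := fun n x =>
    ENNReal.ofReal_sub _ (hF0 n x)
  have hfatou : L ≤ atTop.liminf (fun n => a n - b n) := by
    have h1 : ∫⁻ x, atTop.liminf (fun n => ENNReal.ofReal (g n x - F n x)) ∂μ
        ≤ atTop.liminf (fun n => ∫⁻ x, ENNReal.ofReal (g n x - F n x) ∂μ) :=
      lintegral_liminf_le' fun n =>
        ENNReal.measurable_ofReal.comp_aemeasurable ((hg_int n).aemeasurable.sub (hFmeas n))
    have h2 : ∫⁻ x, atTop.liminf (fun n => ENNReal.ofReal (g n x - F n x)) ∂μ = L := by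
      apply lintegral_congr_ae
      filter_upwards [hFlim, hglim] with x hFx hgx
      have : Tendsto (fun n => ENNReal.ofReal (g n x - F n x)) atTop (nhds (G' x)) := by
        have := (ENNReal.continuous_ofReal.tendsto _).comp (hgx.sub hFx)
        simpa [Function.comp_def] using this
      exact this.liminf_eq
    have h3 : ∀ n, ∫⁻ x, ENNReal.ofReal (g n x - F n x) ∂μ = a n - b n := by
      intro n
      have : (fun x => ENNReal.ofReal (g n x - F n x)) = fun x => g' n x - F' n x := by
        funext x; exact hsub n x
      rw [this]
      exact lintegral_sub' (hF'meas n) (fun h => (han n) (top_le_iff.mp (h ▸ hba n)))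
        (Eventually.of_forall fun x => ENNReal.ofReal_le_ofReal (hle n x))
    calc L = ∫⁻ x, atTop.liminf (fun n => ENNReal.ofReal (g n x - F n x)) ∂μ := h2.symm
      _ ≤ atTop.liminf (fun n => ∫⁻ x, ENNReal.ofReal (g n x - F n x) ∂μ) := h1
      _ = atTop.liminf (fun n => a n - b n) := by simp only [h3]
  -- conclude `limsup b = 0`
  have hBleL : atTop.limsup b ≤ L := by
    calc atTop.limsup b ≤ atTop.limsup a := limsup_le_limsup (Eventually.of_forall hba)
      _ = L := ha.limsup_eq
  have hB0 : atTop.limsup b = 0 := by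
    set B := atTop.limsup b with hB_def
    have key : ∀ ε : NNReal, 0 < ε → B ≤ ε := by
      intro ε hε
      have hεtop : L + (ε : ENNReal) ≠ ⊤ := by
        simp [hL]
      have hlt : ∀ᶠ n in atTop, a n < L + ε :=
        ha.eventually (gt_mem_nhds (ENNReal.lt_add_right hL (by simpa using hε.ne')))
      have h4 : atTop.liminf (fun n => a n - b n)
          ≤ atTop.liminf (fun n => (L + ε) - b n) := by
        refine liminf_le_liminf ?_
        filter_upwards [hlt] with n hn
        exact tsub_le_tsub_right hn.le _
      have h5 : atTop.liminf (fun n => (L + ε) - b n) = (L + ε) - B :=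
        ENNReal.liminf_const_sub atTop b hεtop
      have h6 : L ≤ (L + ε) - B := hfatou.trans (h4.trans_eq h5)
      have hBle : B ≤ L + ε := hBleL.trans le_self_add
      have h7 : L + B ≤ L + ε := by
        calc L + B ≤ ((L + ε) - B) + B := add_le_add_left h6 B
          _ = L + ε := tsub_add_cancel_of_le hBle
      exact (ENNReal.add_le_add_iff_left hL).mp h7
    refine le_antisymm ?_ zero_le
    refine ENNReal.le_of_forall_pos_le_add fun ε hε _ => ?_
    simpa using key ε hε
  have hbtend : Tendsto b atTop (nhds 0) := by
    refine tendsto_of_liminf_eq_limsup ?_ hB0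
    exact le_antisymm (hB0 ▸ liminf_le_limsup) zero_le
  -- back to real integrals
  have hint_eq : ∀ n, ∫ x, F n x ∂μ = (b n).toReal := fun n =>
    integral_eq_lintegral_of_nonneg_ae (Eventually.of_forall (hF0 n))
      (aestronglyMeasurable_iff_aemeasurable.mpr (hFmeas n))
  have := (ENNReal.tendsto_toReal (by simp : (0:ENNReal) ≠ ⊤)).comp hbtend
  simpa [Function.comp_def, hint_eq] using this

theorem stmt17 (N : ℕ) (p : ℝ) (hp : 2 ≤ p) (f : ℝ → ℝ)
    (hodd : ∀ t : ℝ, f (-t) = - f t)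
    (hf0 : f 0 = 0)
    (hf' : ∀ t : ℝ, HasDerivAt f ((1 + 2 ^ (p - 1) * |f t| ^ p) ^ (-(1 / p))) t)
    (v : ℕ → EuclideanSpace ℝ (Fin N) → ℝ) (w : EuclideanSpace ℝ (Fin N) → ℝ)
    (hmeas : ∀ n, Measurable (v n)) (hwmeas : Measurable w)
    (hpos : ∀ n, ∀ x, 0 ≤ v n x)
    (hae : ∀ᵐ x : EuclideanSpace ℝ (Fin N) ∂volume,
      Filter.Tendsto (fun n => v n x) Filter.atTop (nhds (w x)))
    (hwLp : MemLp w (ENNReal.ofReal p) volume)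
    (hintn : ∀ n, Integrable (fun x => |f (v n x)| ^ p))
    (hintw : Integrable (fun x => |f (w x)| ^ p))
    (hto : Filter.Tendsto (fun n => ∫ x, |f (v n x)| ^ p) Filter.atTop
      (nhds (∫ x, |f (w x)| ^ p))) :
    Filter.Tendsto (fun n => ∫ x, |f (v n x - w x)| ^ p) Filter.atTop (nhds 0) := by
  have hp0 : (0:ℝ) < p := by linarith
  -- f is 1-Lipschitz
  have hdiff : Differentiable ℝ f := fun t => (hf' t).differentiableAt
  have hlip : LipschitzWith 1 f := by
    apply lipschitzWith_of_nnnorm_deriv_le hdiff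
    intro t
    rw [(hf' t).deriv]
    have h1 : (1:ℝ) ≤ 1 + 2 ^ (p - 1) * |f t| ^ p := by
      have : (0:ℝ) ≤ 2 ^ (p - 1) * |f t| ^ p := by positivity
      linarith
    have h2 : (1 + 2 ^ (p - 1) * |f t| ^ p) ^ (-(1 / p)) ≤ 1 :=
      Real.rpow_le_one_of_one_le_of_nonpos h1 (neg_nonpos.mpr (by positivity))
    have h3 : (0:ℝ) ≤ (1 + 2 ^ (p - 1) * |f t| ^ p) ^ (-(1 / p)) :=
      Real.rpow_nonneg (by linarith) _
    rw [← Real.toNNReal_eq_nnnorm_of_nonneg h3]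
    exact Real.toNNReal_le_one.mpr h2
  have hlip' : ∀ s t : ℝ, |f s - f t| ≤ |s - t| := by
    intro s t
    have := hlip.dist_le_mul s t
    simpa [Real.dist_eq] using this
  -- key pointwise bound
  have habs : ∀ a b : ℝ, |f (a - b)| ≤ |f a| + |b| := by
    intro a b
    have h := hlip' (a - b) a
    have : |f (a - b)| - |f a| ≤ |f (a - b) - f a| := abs_sub_abs_le_abs_sub _ _
    have h2 : |a - b - a| = |b| := by rw [show a - b - a = -b by ring, abs_neg]
    linarith [h2 ▸ h]
  have hsum_rpow : ∀ a b : ℝ, 0 ≤ a → 0 ≤ b → (a + b) ^ p ≤ 2 ^ p * (a ^ p + b ^ p) := by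
    intro a b ha hb
    have h1 : a + b ≤ 2 * max a b := by
      rcases le_total a b with h | h
      · simp [max_eq_right h]; linarith
      · simp [max_eq_left h]; linarith
    have hm : 0 ≤ max a b := le_max_of_le_left ha
    calc (a + b) ^ p ≤ (2 * max a b) ^ p :=
          Real.rpow_le_rpow (by linarith) h1 hp0.le
      _ = 2 ^ p * (max a b) ^ p := Real.mul_rpow (by norm_num) hm
      _ ≤ 2 ^ p * (a ^ p + b ^ p) := by
          apply mul_le_mul_of_nonneg_left _ (by positivity)
          rcases le_total a b with h | h
          · rw [max_eq_right h]
            have : (0:ℝ) ≤ a ^ p := Real.rpow_nonneg ha p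
            linarith
          · rw [max_eq_left h]
            have : (0:ℝ) ≤ b ^ p := Real.rpow_nonneg hb p
            linarith
  -- integrability of |w|^p
  have hwint : Integrable (fun x => |w x| ^ p) volume := by
    have h := hwLp.integrable_norm_rpow (by simp [ENNReal.ofReal_eq_zero]; linarith)
      ENNReal.ofReal_ne_top
    simpa [ENNReal.toReal_ofReal hp0.le, Real.norm_eq_abs] using h
  -- set up gen_dct
  set F : ℕ → EuclideanSpace ℝ (Fin N) → ℝ := fun n x => |f (v n x - w x)| ^ p with hF
  set g : ℕ → EuclideanSpace ℝ (Fin N) → ℝ :=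
    fun n x => 2 ^ p * (|f (v n x)| ^ p + |w x| ^ p) with hg
  set G : EuclideanSpace ℝ (Fin N) → ℝ := fun x => 2 ^ p * (|f (w x)| ^ p + |w x| ^ p) with hG
  have hcont : Continuous f := hdiff.continuous
  have hFmeas : ∀ n, AEMeasurable (F n) volume := fun n =>
    (((hcont.measurable.comp ((hmeas n).sub hwmeas)).abs.pow_const _)).aemeasurable
  have hF0 : ∀ n x, 0 ≤ F n x := fun n x => Real.rpow_nonneg (abs_nonneg _) p
  have hle : ∀ n x, F n x ≤ g n x := by
    intro n x
    calc F n x ≤ (|f (v n x)| + |w x|) ^ p :=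
          Real.rpow_le_rpow (abs_nonneg _) (habs _ _) hp0.le
      _ ≤ 2 ^ p * (|f (v n x)| ^ p + |w x| ^ p) :=
          hsum_rpow _ _ (abs_nonneg _) (abs_nonneg _)
  have hG0 : ∀ x, 0 ≤ G x := fun x => by positivity
  have hg_int : ∀ n, Integrable (g n) volume := fun n => ((hintn n).add hwint).const_mul _
  have hG_int : Integrable G volume := (hintw.add hwint).const_mul _
  have hrpow_cont : ∀ y : ℝ, ContinuousAt (fun s : ℝ => s ^ p) y := fun y =>
    Real.continuousAt_rpow_const y p (Or.inr hp0.le)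
  have hFlim : ∀ᵐ x ∂(volume : Measure (EuclideanSpace ℝ (Fin N))),
      Filter.Tendsto (fun n => F n x) Filter.atTop (nhds 0) := by
    filter_upwards [hae] with x hx
    have h1 : Filter.Tendsto (fun n => v n x - w x) Filter.atTop (nhds 0) := by
      simpa using hx.sub (tendsto_const_nhds (x := w x))
    have h2 : Filter.Tendsto (fun n => |f (v n x - w x)|) Filter.atTop (nhds 0) := by
      have := ((hcont.tendsto 0).comp h1).abs
      simpa [hf0] using this
    have := (hrpow_cont 0).tendsto.comp h2
    simpa [Real.zero_rpow hp0.ne', Function.comp_def] using this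
  have hglim : ∀ᵐ x ∂(volume : Measure (EuclideanSpace ℝ (Fin N))),
      Filter.Tendsto (fun n => g n x) Filter.atTop (nhds (G x)) := by
    filter_upwards [hae] with x hx
    have h2 : Filter.Tendsto (fun n => |f (v n x)| ^ p) Filter.atTop (nhds (|f (w x)| ^ p)) :=
      (hrpow_cont _).tendsto.comp ((hcont.tendsto _).comp hx).abs
    exact ((h2.add tendsto_const_nhds).const_mul _)
  have hgtend : Filter.Tendsto (fun n => ∫ x, g n x) Filter.atTop (nhds (∫ x, G x)) := by
    have heq : ∀ n, ∫ x, g n x = 2 ^ p * ((∫ x, |f (v n x)| ^ p) + ∫ x, |w x| ^ p) := by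
      intro n
      rw [integral_const_mul, integral_add (hintn n) hwint]
    have heqG : ∫ x, G x = 2 ^ p * ((∫ x, |f (w x)| ^ p) + ∫ x, |w x| ^ p) := by
      rw [integral_const_mul, integral_add hintw hwint]
    rw [heqG]
    simp only [heq]
    exact ((hto.add tendsto_const_nhds).const_mul _)
  exact gen_dct hFmeas hF0 hle hG0 hg_int hG_int hFlim hglim hgtend
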